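/- For every positive integer c \le \max_{k \ge 1} (2^k n - (k + 2^k - 2) 2^k - 1), there exists an arithmetical structure on K_n whose maximum value is c. -/

import Mathlib

/-- An arithmetical structure on `K n`. -/
def IsArithStruct (n : ℕ) (r : Fin n → ℕ) : Prop :=
  (∀ i, 0 < r i) ∧ Finset.univ.gcd r = 1 ∧ ∀ j, r j ∣ ∑ i, r i


lemma arith_small (k' s m h : ℕ) (hkh : k' + 2 ≤ h)
    (hsmall : m + 2 ≤ s + 1 + 2*h)
    (horig : m + 2 + (k'+1)*(2*h) ≤ (s+2)*(2*h)) :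
    m + 2 + k'*h ≤ (s+2)*h := by
  rcases lt_trichotomy s k' with hlt | rfl | hgt
  · exfalso
    have hle : (s+2)*(2*h) ≤ (k'+1)*(2*h) := Nat.mul_le_mul_right _ (by omega)
    omega
  · have e1 : (s+2)*(2*h) = (s+1)*(2*h) + 2*h := by ring
    have e2 : (s+2)*h = s*h + 2*h := by ring
    omega
  · obtain ⟨u, rfl⟩ : ∃ u, s = k' + 1 + u := ⟨s - (k'+1), by omega⟩
    have e5 : (k'+1+u+2)*h = k'*h + h + u*h + 2*h := by ring
    have hu : u ≤ u*h := Nat.le_mul_of_pos_right _ (by omega)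
    omega

/-- Key combinatorial lemma: a sum of `s` powers of two, each at most `2^k`,
can realize any `m` with `s ≤ m` and `m + 2 + (k-1)*2^k ≤ (s+1)*2^k`. -/
lemma pow_list : ∀ k s m : ℕ, s ≤ m → m + 2 + (k-1)*2^k ≤ (s+1)*2^k →
    ∃ L : List ℕ, L.length = s ∧ L.sum = m ∧ ∀ x ∈ L, ∃ j, j ≤ k ∧ x = 2^j := by
  intro k
  induction k with
  | zero => intro s m h1 h2; simp at h2; omega
  | succ k ihk =>
    intro s
    induction s with
    | zero =>
      intro m h1 h2
      simp only [Nat.add_sub_cancel, one_mul] at h2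
      rcases Nat.eq_zero_or_pos k with rfl | hk
      · have hm : m = 0 := by norm_num at h2; omega
        exact ⟨[], by simp [hm]⟩
      · exfalso
        have : 2^(k+1) ≤ k * 2^(k+1) := Nat.le_mul_of_pos_left _ hk
        omega
    | succ s ihs =>
      intro m h1 h2
      by_cases hbig : s + 1 + 2^(k+1) ≤ m + 1
      · obtain ⟨L, hlen, hsum, hmem⟩ := ihs (m - 2^(k+1))
          (by omega)
          (by
            have e : (s+1+1)*2^(k+1) = (s+1)*2^(k+1) + 2^(k+1) := by ring
            omega)
        refine ⟨2^(k+1) :: L, by simp [hlen], ?_, ?_⟩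
        · simp only [List.sum_cons, hsum]; omega
        · intro x hx
          rcases List.mem_cons.mp hx with rfl | hx
          · exact ⟨k+1, le_refl _, rfl⟩
          · exact hmem x hx
      · -- small regime
        rcases Nat.eq_zero_or_pos k with rfl | hk
        · -- target power 2: entries in {1, 2}
          simp only [Nat.add_sub_cancel] at h2
          norm_num at h2
          refine ⟨List.replicate (m - (s+1)) 2 ++ List.replicate (2*(s+1) - m) 1, ?_, ?_, ?_⟩
          · simp only [List.length_append, List.length_replicate]; omega
          · simp only [List.sum_append, List.sum_replicate, smul_eq_mul]; omega
          · intro x hx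
            simp only [List.mem_append, List.mem_replicate] at hx
            rcases hx with ⟨_, rfl⟩ | ⟨_, rfl⟩
            · exact ⟨1, le_refl _, rfl⟩
            · exact ⟨0, by omega, rfl⟩
        · -- k ≥ 1 : reduce the cap from 2^(k+1) to 2^k
          have harith : m + 2 + (k-1)*2^k ≤ (s+1+1)*2^k := by
            obtain ⟨k', rfl⟩ : ∃ k', k = k' + 1 := ⟨k - 1, by omega⟩
            simp only [Nat.add_sub_cancel]
            have hkh : k' + 2 ≤ 2^(k'+1) := by
              have := Nat.lt_two_pow_self (n := k'+1)
              have h2' : (2:ℕ) ≤ 2^(k'+1) := by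
                have := Nat.one_lt_two_pow_iff (n := k'+1); omega
              omega
            apply arith_small k' s m (2^(k'+1)) hkh
            · omega
            · have e : (2:ℕ)^(k'+1+1) = 2*2^(k'+1) := by ring
              simp only [Nat.add_sub_cancel] at h2
              calc m + 2 + (k'+1)*(2*2^(k'+1)) = m + 2 + (k'+1)*2^(k'+1+1) := by rw [e]
                _ ≤ (s+1+1)*2^(k'+1+1) := h2
                _ = (s+2)*(2*2^(k'+1)) := by rw [e]
          obtain ⟨L, hlen, hsum, hmem⟩ := ihk (s+1) m h1 harith
          exact ⟨L, hlen, hsum, fun x hx => by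
            obtain ⟨j, hj, hx'⟩ := hmem x hx; exact ⟨j, by omega, hx'⟩⟩

lemma of_list (c : ℕ) (L : List ℕ) (h1 : 1 ∈ L) (hcL : c ∈ L)
    (hle : ∀ x ∈ L, x ≤ c) (hpos : ∀ x ∈ L, 0 < x) (hdvd : ∀ x ∈ L, x ∣ L.sum) :
    ∃ r : Fin L.length → ℕ, IsArithStruct L.length r ∧ (∀ i, r i ≤ c) ∧ (∃ i, r i = c) := by
  refine ⟨fun i => L[i.1], ⟨fun i => hpos _ (L.getElem_mem _), ?_, fun j => ?_⟩,
    fun i => hle _ (L.getElem_mem _), ?_⟩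
  · obtain ⟨i, hi, hgi⟩ := List.mem_iff_getElem.mp h1
    refine Nat.dvd_one.mp ?_
    have hd := Finset.gcd_dvd (f := fun i : Fin L.length => L[i.1]) (Finset.mem_univ (⟨i, hi⟩ : Fin L.length))
    simpa [hgi] using hd
  · rw [Fin.sum_univ_getElem]
    exact hdvd _ (L.getElem_mem _)
  · obtain ⟨i, hi, hgi⟩ := List.mem_iff_getElem.mp hcL
    exact ⟨⟨i, hi⟩, hgi⟩

theorem stmt_17 (n c : ℕ) (hc : 0 < c)
    (hbound : ∃ k : ℕ, 0 < k ∧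
      (c : ℤ) ≤ 2 ^ k * n - ((k : ℤ) + 2 ^ k - 2) * 2 ^ k - 1) :
    ∃ r : Fin n → ℕ, IsArithStruct n r ∧ (∀ i, r i ≤ c) ∧ (∃ i, r i = c) := by
  obtain ⟨k, hk, hb⟩ := hbound
  have hP : (2:ℕ) ≤ 2^k := by
    have := Nat.one_lt_two_pow_iff (n := k); omega
  have hcn : c + 1 + (k + 2^k - 2) * 2^k ≤ 2^k * n := by
    have hz : ((k + 2^k - 2 : ℕ) : ℤ) = (k : ℤ) + 2^k - 2 := by
      push_cast [Nat.cast_sub (by omega : 2 ≤ k + 2^k)]; ring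
    have : (c : ℤ) + 1 + ((k + 2^k - 2 : ℕ) : ℤ) * 2^k ≤ 2^k * n := by
      rw [hz]; linarith
    exact_mod_cast this
  have hkP : k < 2^k := Nat.lt_two_pow_self (n := k)
  have hn : k + 2^k - 1 ≤ n := by
    by_contra hcon
    have h1 : 2^k * n ≤ 2^k * (k + 2^k - 2) := Nat.mul_le_mul_left _ (by omega)
    have h2 : 2^k * (k + 2^k - 2) = (k + 2^k - 2) * 2^k := Nat.mul_comm _ _
    omega
  rcases lt_or_ge c n with hlt | hge
  · -- simple construction : (n - c) copies of c and c ones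
    set Lst : List ℕ := List.replicate (n - c) c ++ List.replicate c 1 with hLst
    have hlen : Lst.length = n := by simp [hLst]; omega
    have hsum : Lst.sum = (n - c) * c + c := by
      simp [hLst, List.sum_replicate, smul_eq_mul]
    have hmem : ∀ x ∈ Lst, x = c ∨ x = 1 := by
      intro x hx
      simp only [hLst, List.mem_append, List.mem_replicate] at hx
      rcases hx with ⟨_, rfl⟩ | ⟨_, rfl⟩
      · exact Or.inl rfl
      · exact Or.inr rfl
    have main := of_list c Lst
      (List.mem_append_right _ (List.mem_replicate.mpr ⟨by omega, rfl⟩))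
      (List.mem_append_left _ (List.mem_replicate.mpr ⟨by omega, rfl⟩))
      (fun x hx => by rcases hmem x hx with rfl | rfl <;> omega)
      (fun x hx => by rcases hmem x hx with rfl | rfl <;> omega)
      (fun x hx => by
        rw [hsum]
        rcases hmem x hx with rfl | rfl
        · exact dvd_add (dvd_mul_left _ _) dvd_rfl
        · exact one_dvd _)
    rwa [hlen] at main
  · -- power construction
    obtain ⟨L, hlenL, hsumL, hmemL⟩ := pow_list k (n - 2^k) (c - 1)
      (by omega)
      (by
        have e2 : (k + 2^k - 2) * 2^k = (k-1)*2^k + (2^k-1)*2^k := by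
          have e : k + 2^k - 2 = (k-1) + (2^k-1) := by omega
          rw [e, add_mul]
        have e1 : 2^k * n = n * 2^k := Nat.mul_comm _ _
        have e3 : (n - 2^k) * 2^k = n * 2^k - 2^k * 2^k := Nat.sub_mul _ _ _
        have e3b : 2^k * 2^k ≤ n * 2^k := Nat.mul_le_mul_right _ (by omega)
        have e4 : ((n - 2^k) + 1) * 2^k = (n - 2^k) * 2^k + 2^k := by ring
        have e5 : (2^k - 1) * 2^k = 2^k * 2^k - 1 * 2^k := Nat.sub_mul _ _ _
        have e5c : 1 * 2^k = 2^k := one_mul _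
        have e5b : 2^k ≤ 2^k * 2^k := Nat.le_mul_of_pos_left _ (by omega)
        omega)
    set Lst : List ℕ := List.replicate (2^k - 1) c ++ 1 :: L with hLst
    have hlen : Lst.length = n := by
      simp [hLst, hlenL]; omega
    have hsum : Lst.sum = 2^k * c := by
      simp only [hLst, List.sum_append, List.sum_replicate, smul_eq_mul, List.sum_cons, hsumL]
      have e : (2^k - 1) * c = 2^k * c - 1 * c := Nat.sub_mul _ _ _
      have ec : 1 * c = c := one_mul _
      have eb : c ≤ 2^k * c := Nat.le_mul_of_pos_left _ (by omega)
      omega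
    have hmem : ∀ x ∈ Lst, x = c ∨ x = 1 ∨ ∃ j, j ≤ k ∧ x = 2^j := by
      intro x hx
      simp only [hLst, List.mem_append, List.mem_replicate, List.mem_cons] at hx
      rcases hx with ⟨_, rfl⟩ | rfl | hx
      · exact Or.inl rfl
      · exact Or.inr (Or.inl rfl)
      · exact Or.inr (Or.inr (hmemL x hx))
    have main := of_list c Lst
      (List.mem_append_right _ (List.mem_cons_self))
      (List.mem_append_left _ (List.mem_replicate.mpr ⟨by omega, rfl⟩))
      (fun x hx => by
        rcases hmem x hx with rfl | rfl | ⟨j, hj, rfl⟩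
        · omega
        · omega
        · calc (2:ℕ)^j ≤ 2^k := Nat.pow_le_pow_right (by norm_num) hj
            _ ≤ n := by omega
            _ ≤ c := hge)
      (fun x hx => by
        rcases hmem x hx with rfl | rfl | ⟨j, hj, rfl⟩
        · omega
        · omega
        · positivity)
      (fun x hx => by
        rw [hsum]
        rcases hmem x hx with rfl | rfl | ⟨j, hj, rfl⟩
        · exact dvd_mul_left _ _
        · exact one_dvd _
        · exact dvd_mul_of_dvd_left (pow_dvd_pow 2 hj) _)
    rwa [hlen] at main
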